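/- Let m₁, m₂ ≥ 0 and let H_{i,j} for 0 ≤ i ≤ m₁, 0 ≤ j ≤ m₂ be matrices with entries in the set of single-qubit Pauli symbols {I, X, Y, Z, 0} of size r × n. Suppose for all 0 ≤ d₁ ≤ m₁ and 0 ≤ d₂ ≤ m₂: Σ_{i=0}^{m₁-d₁} Σ_{j=0}^{m₂-d₂} ⟨H_{i,j}, H_{i+d₁,j+d₂}⟩_s = 0 and Σ_{i=0}^{m₁-d₁} Σ_{j=0}^{m₂-d₂} ⟨H_{i+d₁,j}, H_{i,j+d₂}⟩_s = 0 (as r×r matrices over F₂). Then for any coupling lengths L₁ > m₁ and L₂ > m₂, every pair of rows of the tail-biting 2D spatially-coupled parity check matrix built from the H_{i,j} has vanishing symplectic inner product, i.e., all stabilizer generators pairwise commute. -/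

import Mathlib

open Matrix Finset

/-- Symplectic inner product of Pauli-symbol matrices (Pauli symbols identified with `F₂²`,
`0 ↦ (0,0)`): the `(i,j)` entry is `Σ_k ⟨P_{i,k}, Q_{j,k}⟩_s`. -/
def sympMat {r₁ r₂ n : ℕ} (P : Matrix (Fin r₁) (Fin n) (ZMod 2 × ZMod 2))
    (Q : Matrix (Fin r₂) (Fin n) (ZMod 2 × ZMod 2)) : Matrix (Fin r₁) (Fin r₂) (ZMod 2) :=
  fun i j => ∑ k, ((P i k).1 * (Q j k).2 + (P i k).2 * (Q j k).1)

/-- The block of the tail-biting 2D spatially-coupled parity check matrix at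
row-block `t` and column-block `s`: it is `H i j` when `t = s + (i,j) (mod (L₁,L₂))`. -/
def Hfull (m₁ m₂ : ℕ) {r n : ℕ} (L₁ L₂ : ℕ) [NeZero L₁] [NeZero L₂]
    (H : ℕ → ℕ → Matrix (Fin r) (Fin n) (ZMod 2 × ZMod 2))
    (t s : ZMod L₁ × ZMod L₂) : Matrix (Fin r) (Fin n) (ZMod 2 × ZMod 2) :=
  ∑ i ∈ Finset.range (m₁ + 1), ∑ j ∈ Finset.range (m₂ + 1),
    if t.1 = s.1 + (i : ZMod L₁) ∧ t.2 = s.2 + (j : ZMod L₂) then H i j else 0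

lemma sympMat_comm {r₁ r₂ n : ℕ} (P : Matrix (Fin r₁) (Fin n) (ZMod 2 × ZMod 2))
    (Q : Matrix (Fin r₂) (Fin n) (ZMod 2 × ZMod 2)) (i : Fin r₁) (j : Fin r₂) :
    sympMat P Q i j = sympMat Q P j i := by
  simp only [sympMat]
  exact Finset.sum_congr rfl fun k _ => by ring

lemma trunc2 (F : ℕ → ℕ → ZMod 2) (N₁ N₂ X Y : ℕ) (hX : X < N₁) (hY : Y < N₂)
    (hF : ∀ x y, (X < x ∨ Y < y) → F x y = 0) :
    ∑ x ∈ Finset.range N₁, ∑ y ∈ Finset.range N₂, F x y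
      = ∑ x ∈ Finset.range (X+1), ∑ y ∈ Finset.range (Y+1), F x y := by
  have hrow : ∀ x, ∑ y ∈ Finset.range N₂, F x y = ∑ y ∈ Finset.range (Y+1), F x y := by
    intro x
    refine (Finset.sum_subset (Finset.range_subset_range.2 hY) ?_).symm
    intro y _ hy
    exact hF x y (Or.inr (by simp [Finset.mem_range] at hy; omega))
  rw [Finset.sum_congr rfl (fun x _ => hrow x)]
  refine (Finset.sum_subset (Finset.range_subset_range.2 hX) ?_).symm
  intro x _ hx
  exact Finset.sum_eq_zero (fun y _ => hF x y (Or.inl (by simp [Finset.mem_range] at hx; omega)))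

lemma split_sum (F : ℕ → ZMod 2) (D L : ℕ) (h : D ≤ L) :
    ∑ x ∈ Finset.range L, F x
      = ∑ x ∈ Finset.range D, F x + ∑ k ∈ Finset.range (L - D), F (D + k) := by
  have h0 : ∑ x ∈ Finset.range L, F x = ∑ x ∈ Finset.Ico 0 D, F x + ∑ x ∈ Finset.Ico D L, F x := by
    rw [Finset.range_eq_Ico, Finset.sum_Ico_consecutive _ (Nat.zero_le D) h]
  rw [h0, ← Finset.range_eq_Ico, Finset.sum_Ico_eq_sum_range]

lemma main_calc {L₁ L₂ : ℕ} (m₁ m₂ : ℕ) [NeZero L₁] [NeZero L₂]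
    (hL₁ : m₁ < L₁) (hL₂ : m₂ < L₂)
    (G : ℕ → ℕ → ℕ → ℕ → ZMod 2)
    (hz : ∀ i j i' j', (m₁ < i ∨ m₂ < j ∨ m₁ < i' ∨ m₂ < j') → G i j i' j' = 0)
    (e11 : ∀ a ≤ m₁, ∀ b ≤ m₂, ∑ x ∈ Finset.range (m₁ - a + 1), ∑ y ∈ Finset.range (m₂ - b + 1),
        G x y (x + a) (y + b) = 0)
    (e12 : ∀ a ≤ m₁, ∀ b ≤ m₂, ∑ x ∈ Finset.range (m₁ - a + 1), ∑ y ∈ Finset.range (m₂ - b + 1),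
        G x (y + b) (x + a) y = 0)
    (e21 : ∀ a ≤ m₁, ∀ b ≤ m₂, ∑ x ∈ Finset.range (m₁ - a + 1), ∑ y ∈ Finset.range (m₂ - b + 1),
        G (x + a) y x (y + b) = 0)
    (e22 : ∀ a ≤ m₁, ∀ b ≤ m₂, ∑ x ∈ Finset.range (m₁ - a + 1), ∑ y ∈ Finset.range (m₂ - b + 1),
        G (x + a) (y + b) x y = 0)
    (t t' : ZMod L₁ × ZMod L₂) :
    ∑ s : ZMod L₁ × ZMod L₂,
      G (t.1 - s.1).val (t.2 - s.2).val (t'.1 - s.1).val (t'.2 - s.2).val = 0 := by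
  set A₁ := (t'.1 - t.1).val with hA1
  set A₂ := (t'.2 - t.2).val with hA2
  have hA₁L : A₁ < L₁ := ZMod.val_lt _
  have hA₂L : A₂ < L₂ := ZMod.val_lt _
  set D₁ := L₁ - A₁ with hD1
  set D₂ := L₂ - A₂ with hD2
  -- reindex the sum over s to a double sum over ℕ ranges
  have reidx : ∑ s : ZMod L₁ × ZMod L₂,
      G (t.1 - s.1).val (t.2 - s.2).val (t'.1 - s.1).val (t'.2 - s.2).val
      = ∑ x ∈ Finset.range L₁, ∑ y ∈ Finset.range L₂,
          G x y ((A₁ + x) % L₁) ((A₂ + y) % L₂) := by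
    rw [← Finset.sum_product']
    refine Finset.sum_nbij' (i := fun s => ((t.1 - s.1).val, (t.2 - s.2).val))
      (j := fun p => (t.1 - (p.1 : ZMod L₁), t.2 - (p.2 : ZMod L₂))) ?_ ?_ ?_ ?_ ?_
    · intro s _
      simp [Finset.mem_product, ZMod.val_lt]
    · intro p _
      simp
    · intro s _
      simp [ZMod.natCast_val, ZMod.cast_id]
    · intro p hp
      simp only [Finset.mem_product, Finset.mem_range] at hp
      simp [ZMod.val_cast_of_lt hp.1, ZMod.val_cast_of_lt hp.2]
    · intro s _
      have k1 : (t'.1 - s.1).val = (A₁ + (t.1 - s.1).val) % L₁ := by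
        have : t'.1 - s.1 = (t'.1 - t.1) + (t.1 - s.1) := by ring
        rw [this, ZMod.val_add]
      have k2 : (t'.2 - s.2).val = (A₂ + (t.2 - s.2).val) % L₂ := by
        have : t'.2 - s.2 = (t'.2 - t.2) + (t.2 - s.2) := by ring
        rw [this, ZMod.val_add]
      rw [k1, k2]
  rw [reidx]
  have hD₁L : D₁ ≤ L₁ := Nat.sub_le _ _
  have hD₂L : D₂ ≤ L₂ := Nat.sub_le _ _
  have innersplit : ∀ x, ∑ y ∈ Finset.range L₂, G x y ((A₁+x)%L₁) ((A₂+y)%L₂)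
      = (∑ y ∈ Finset.range D₂, G x y ((A₁+x)%L₁) ((A₂+y)%L₂))
        + ∑ l ∈ Finset.range (L₂ - D₂), G x (D₂+l) ((A₁+x)%L₁) ((A₂+(D₂+l))%L₂) :=
    fun x => split_sum _ D₂ L₂ hD₂L
  rw [Finset.sum_congr rfl (fun x _ => innersplit x), Finset.sum_add_distrib,
      split_sum _ D₁ L₁ hD₁L, split_sum _ D₁ L₁ hD₁L]
  have hS1 : ∑ x ∈ Finset.range D₁, ∑ y ∈ Finset.range D₂,
      G x y ((A₁+x)%L₁) ((A₂+y)%L₂) = 0 := by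
    have m1 : ∀ x ∈ Finset.range D₁, ∀ y ∈ Finset.range D₂,
        G x y ((A₁+x)%L₁) ((A₂+y)%L₂) = G x y (A₁+x) (A₂+y) := by
      intro x hx y hy
      simp only [Finset.mem_range] at hx hy
      rw [Nat.mod_eq_of_lt (by omega), Nat.mod_eq_of_lt (by omega)]
    rw [Finset.sum_congr rfl (fun x hx => Finset.sum_congr rfl (fun y hy => m1 x hx y hy))]
    by_cases ha : A₁ ≤ m₁
    · by_cases hb : A₂ ≤ m₂
      · have hvan : ∀ x y, (m₁ - A₁ < x ∨ m₂ - A₂ < y) → G x y (A₁+x) (A₂+y) = 0 := by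
          intro x y h
          rcases h with h | h
          · exact hz _ _ _ _ (Or.inr (Or.inr (Or.inl (by omega))))
          · exact hz _ _ _ _ (Or.inr (Or.inr (Or.inr (by omega))))
        rw [trunc2 _ D₁ D₂ (m₁ - A₁) (m₂ - A₂) (by omega) (by omega) hvan]
        simp_rw [Nat.add_comm A₁, Nat.add_comm A₂]
        exact e11 A₁ ha A₂ hb
      · exact Finset.sum_eq_zero fun x _ => Finset.sum_eq_zero fun y _ =>
          hz _ _ _ _ (Or.inr (Or.inr (Or.inr (by omega))))
    · exact Finset.sum_eq_zero fun x _ => Finset.sum_eq_zero fun y _ =>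
        hz _ _ _ _ (Or.inr (Or.inr (Or.inl (by omega))))
  have hS2 : ∑ x ∈ Finset.range D₁, ∑ l ∈ Finset.range (L₂ - D₂),
      G x (D₂+l) ((A₁+x)%L₁) ((A₂+(D₂+l))%L₂) = 0 := by
    have m2 : ∀ x ∈ Finset.range D₁, ∀ l ∈ Finset.range (L₂ - D₂),
        G x (D₂+l) ((A₁+x)%L₁) ((A₂+(D₂+l))%L₂) = G x (D₂+l) (A₁+x) l := by
      intro x hx l hl
      simp only [Finset.mem_range] at hx hl
      have e1 : (A₁+x) % L₁ = A₁ + x := Nat.mod_eq_of_lt (by omega)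
      have e2 : (A₂+(D₂+l)) % L₂ = l := by
        have : A₂ + (D₂ + l) = L₂ + l := by omega
        rw [this, Nat.add_mod_left, Nat.mod_eq_of_lt (by omega)]
      rw [e1, e2]
    rw [Finset.sum_congr rfl (fun x hx => Finset.sum_congr rfl (fun l hl => m2 x hx l hl)),
        show L₂ - D₂ = A₂ from by omega]
    by_cases ha : A₁ ≤ m₁
    · by_cases hd : D₂ ≤ m₂
      · have hvan : ∀ x l, (m₁ - A₁ < x ∨ m₂ - D₂ < l) → G x (D₂+l) (A₁+x) l = 0 := by
          intro x l h
          rcases h with h | h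
          · exact hz _ _ _ _ (Or.inr (Or.inr (Or.inl (by omega))))
          · exact hz _ _ _ _ (Or.inr (Or.inl (by omega)))
        rw [trunc2 _ D₁ A₂ (m₁ - A₁) (m₂ - D₂) (by omega) (by omega) hvan]
        simp_rw [Nat.add_comm A₁, Nat.add_comm D₂]
        exact e12 A₁ ha D₂ hd
      · exact Finset.sum_eq_zero fun x _ => Finset.sum_eq_zero fun l _ =>
          hz _ _ _ _ (Or.inr (Or.inl (by omega)))
    · exact Finset.sum_eq_zero fun x _ => Finset.sum_eq_zero fun l _ =>
        hz _ _ _ _ (Or.inr (Or.inr (Or.inl (by omega))))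
  have hS3 : ∑ k ∈ Finset.range (L₁ - D₁), ∑ y ∈ Finset.range D₂,
      G (D₁+k) y ((A₁+(D₁+k))%L₁) ((A₂+y)%L₂) = 0 := by
    have m3 : ∀ k ∈ Finset.range (L₁ - D₁), ∀ y ∈ Finset.range D₂,
        G (D₁+k) y ((A₁+(D₁+k))%L₁) ((A₂+y)%L₂) = G (D₁+k) y k (A₂+y) := by
      intro k hk y hy
      simp only [Finset.mem_range] at hk hy
      have e1 : (A₁+(D₁+k)) % L₁ = k := by
        have : A₁ + (D₁ + k) = L₁ + k := by omega
        rw [this, Nat.add_mod_left, Nat.mod_eq_of_lt (by omega)]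
      have e2 : (A₂+y) % L₂ = A₂ + y := Nat.mod_eq_of_lt (by omega)
      rw [e1, e2]
    rw [Finset.sum_congr rfl (fun k hk => Finset.sum_congr rfl (fun y hy => m3 k hk y hy)),
        show L₁ - D₁ = A₁ from by omega]
    by_cases hd : D₁ ≤ m₁
    · by_cases hb : A₂ ≤ m₂
      · have hvan : ∀ k y, (m₁ - D₁ < k ∨ m₂ - A₂ < y) → G (D₁+k) y k (A₂+y) = 0 := by
          intro k y h
          rcases h with h | h
          · exact hz _ _ _ _ (Or.inl (by omega))
          · exact hz _ _ _ _ (Or.inr (Or.inr (Or.inr (by omega))))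
        rw [trunc2 _ A₁ D₂ (m₁ - D₁) (m₂ - A₂) (by omega) (by omega) hvan]
        simp_rw [Nat.add_comm D₁, Nat.add_comm A₂]
        exact e21 D₁ hd A₂ hb
      · exact Finset.sum_eq_zero fun k _ => Finset.sum_eq_zero fun y _ =>
          hz _ _ _ _ (Or.inr (Or.inr (Or.inr (by omega))))
    · exact Finset.sum_eq_zero fun k _ => Finset.sum_eq_zero fun y _ =>
        hz _ _ _ _ (Or.inl (by omega))
  have hS4 : ∑ k ∈ Finset.range (L₁ - D₁), ∑ l ∈ Finset.range (L₂ - D₂),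
      G (D₁+k) (D₂+l) ((A₁+(D₁+k))%L₁) ((A₂+(D₂+l))%L₂) = 0 := by
    have m4 : ∀ k ∈ Finset.range (L₁ - D₁), ∀ l ∈ Finset.range (L₂ - D₂),
        G (D₁+k) (D₂+l) ((A₁+(D₁+k))%L₁) ((A₂+(D₂+l))%L₂) = G (D₁+k) (D₂+l) k l := by
      intro k hk l hl
      simp only [Finset.mem_range] at hk hl
      have e1 : (A₁+(D₁+k)) % L₁ = k := by
        have : A₁ + (D₁ + k) = L₁ + k := by omega
        rw [this, Nat.add_mod_left, Nat.mod_eq_of_lt (by omega)]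
      have e2 : (A₂+(D₂+l)) % L₂ = l := by
        have : A₂ + (D₂ + l) = L₂ + l := by omega
        rw [this, Nat.add_mod_left, Nat.mod_eq_of_lt (by omega)]
      rw [e1, e2]
    rw [Finset.sum_congr rfl (fun k hk => Finset.sum_congr rfl (fun l hl => m4 k hk l hl)),
        show L₁ - D₁ = A₁ from by omega, show L₂ - D₂ = A₂ from by omega]
    by_cases hd1 : D₁ ≤ m₁
    · by_cases hd2 : D₂ ≤ m₂
      · have hvan : ∀ k l, (m₁ - D₁ < k ∨ m₂ - D₂ < l) → G (D₁+k) (D₂+l) k l = 0 := by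
          intro k l h
          rcases h with h | h
          · exact hz _ _ _ _ (Or.inl (by omega))
          · exact hz _ _ _ _ (Or.inr (Or.inl (by omega)))
        rw [trunc2 _ A₁ A₂ (m₁ - D₁) (m₂ - D₂) (by omega) (by omega) hvan]
        simp_rw [Nat.add_comm D₁, Nat.add_comm D₂]
        exact e22 D₁ hd1 D₂ hd2
      · exact Finset.sum_eq_zero fun k _ => Finset.sum_eq_zero fun l _ =>
          hz _ _ _ _ (Or.inr (Or.inl (by omega)))
    · exact Finset.sum_eq_zero fun k _ => Finset.sum_eq_zero fun l _ =>
        hz _ _ _ _ (Or.inl (by omega))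
  rw [hS1, hS2, hS3, hS4]
  simp

lemma Hfull_eq (m₁ m₂ : ℕ) {r n : ℕ} (L₁ L₂ : ℕ) [NeZero L₁] [NeZero L₂]
    (hL₁ : m₁ < L₁) (hL₂ : m₂ < L₂)
    (H : ℕ → ℕ → Matrix (Fin r) (Fin n) (ZMod 2 × ZMod 2))
    (hsupp : ∀ i j, (m₁ < i ∨ m₂ < j) → H i j = 0)
    (t s : ZMod L₁ × ZMod L₂) :
    Hfull m₁ m₂ L₁ L₂ H t s = H (t.1 - s.1).val (t.2 - s.2).val := by
  have key : ∀ (L m : ℕ) [NeZero L] (u v : ZMod L), m < L → ∀ i ≤ m,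
      (u = v + (i : ZMod L) ↔ i = (u - v).val) := by
    intro L m _ u v hm i hi
    constructor
    · intro h
      have : (i : ZMod L) = u - v := by rw [h]; ring
      rw [← this, ZMod.val_cast_of_lt (lt_of_le_of_lt hi hm)]
    · intro h
      have : ((u - v).val : ZMod L) = u - v := ZMod.natCast_rightInverse _
      rw [h, this]; ring
  unfold Hfull
  set a := (t.1 - s.1).val with ha
  set b := (t.2 - s.2).val with hb
  have step1 : ∀ i ∈ Finset.range (m₁ + 1), ∀ j ∈ Finset.range (m₂ + 1),
      (if t.1 = s.1 + (i : ZMod L₁) ∧ t.2 = s.2 + (j : ZMod L₂) then H i j else 0)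
      = if i = a then (if j = b then H i j else 0) else 0 := by
    intro i hi j hj
    rw [← ite_and]
    exact if_congr (and_congr (key L₁ m₁ t.1 s.1 hL₁ i (Nat.lt_succ_iff.1 (Finset.mem_range.1 hi)))
      (key L₂ m₂ t.2 s.2 hL₂ j (Nat.lt_succ_iff.1 (Finset.mem_range.1 hj)))) rfl rfl
  rw [Finset.sum_congr rfl (fun i hi => Finset.sum_congr rfl (fun j hj => step1 i hi j hj))]
  have inner : ∀ i, ∑ j ∈ Finset.range (m₂ + 1), (if i = a then (if j = b then H i j else 0) else 0)
      = if i = a then (if b ∈ Finset.range (m₂ + 1) then H i b else 0) else 0 := by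
    intro i
    by_cases h : i = a
    · simp only [h, if_true]
      exact Finset.sum_ite_eq' _ b _
    · simp [h]
  rw [Finset.sum_congr rfl (fun i _ => inner i), Finset.sum_ite_eq' _ a]
  by_cases hA : a ∈ Finset.range (m₁ + 1)
  · by_cases hB : b ∈ Finset.range (m₂ + 1)
    · simp [hA, hB]
    · simp only [hA, hB, if_true, if_false]
      rw [hsupp a b (Or.inr (by simpa [Nat.lt_succ_iff, not_le] using hB))]
  · simp only [hA, if_false]
    rw [hsupp a b (Or.inl (by simpa [Nat.lt_succ_iff, not_le] using hA))]

/-- Theorem 1: if the component matrices of a 2D-SC code satisfy the two families of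
symplectic conditions, then all rows of the tail-biting 2D-SC parity check matrix have
pairwise vanishing symplectic inner products, i.e. all stabilizer generators commute. -/
theorem twoDSC_stabilizer (m₁ m₂ r n L₁ L₂ : ℕ) [NeZero L₁] [NeZero L₂]
    (hL₁ : m₁ < L₁) (hL₂ : m₂ < L₂)
    (H : ℕ → ℕ → Matrix (Fin r) (Fin n) (ZMod 2 × ZMod 2))
    (hsupp : ∀ i j, (m₁ < i ∨ m₂ < j) → H i j = 0)
    (h1 : ∀ d₁ ≤ m₁, ∀ d₂ ≤ m₂,
      ∑ i ∈ Finset.range (m₁ - d₁ + 1), ∑ j ∈ Finset.range (m₂ - d₂ + 1),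
        sympMat (H i j) (H (i + d₁) (j + d₂)) = 0)
    (h2 : ∀ d₁ ≤ m₁, ∀ d₂ ≤ m₂,
      ∑ i ∈ Finset.range (m₁ - d₁ + 1), ∑ j ∈ Finset.range (m₂ - d₂ + 1),
        sympMat (H (i + d₁) j) (H i (j + d₂)) = 0) :
    ∀ (t t' : ZMod L₁ × ZMod L₂) (ρ ρ' : Fin r),
      ∑ s : ZMod L₁ × ZMod L₂, ∑ c : Fin n,
        ((Hfull m₁ m₂ L₁ L₂ H t s ρ c).1 * (Hfull m₁ m₂ L₁ L₂ H t' s ρ' c).2 +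
         (Hfull m₁ m₂ L₁ L₂ H t s ρ c).2 * (Hfull m₁ m₂ L₁ L₂ H t' s ρ' c).1) = 0 := by
  intro t t' ρ ρ'
  have hH := Hfull_eq m₁ m₂ L₁ L₂ hL₁ hL₂ H hsupp
  have hz : ∀ i j i' j', (m₁ < i ∨ m₂ < j ∨ m₁ < i' ∨ m₂ < j') →
      sympMat (H i j) (H i' j') ρ ρ' = 0 := by
    intro i j i' j' h
    rcases h with h | h | h | h
    · rw [hsupp i j (Or.inl h)]; simp [sympMat]
    · rw [hsupp i j (Or.inr h)]; simp [sympMat]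
    · rw [hsupp i' j' (Or.inl h)]; simp [sympMat]
    · rw [hsupp i' j' (Or.inr h)]; simp [sympMat]
  have e11 : ∀ a ≤ m₁, ∀ b ≤ m₂, ∑ x ∈ Finset.range (m₁ - a + 1),
      ∑ y ∈ Finset.range (m₂ - b + 1), sympMat (H x y) (H (x + a) (y + b)) ρ ρ' = 0 := by
    intro a ha b hb
    have := congrFun (congrFun (h1 a ha b hb) ρ) ρ'
    simpa only [Matrix.sum_apply, Matrix.zero_apply] using this
  have e21 : ∀ a ≤ m₁, ∀ b ≤ m₂, ∑ x ∈ Finset.range (m₁ - a + 1),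
      ∑ y ∈ Finset.range (m₂ - b + 1), sympMat (H (x + a) y) (H x (y + b)) ρ ρ' = 0 := by
    intro a ha b hb
    have := congrFun (congrFun (h2 a ha b hb) ρ) ρ'
    simpa only [Matrix.sum_apply, Matrix.zero_apply] using this
  have e12 : ∀ a ≤ m₁, ∀ b ≤ m₂, ∑ x ∈ Finset.range (m₁ - a + 1),
      ∑ y ∈ Finset.range (m₂ - b + 1), sympMat (H x (y + b)) (H (x + a) y) ρ ρ' = 0 := by
    intro a ha b hb
    have h := congrFun (congrFun (h2 a ha b hb) ρ') ρ
    simp only [Matrix.sum_apply, Matrix.zero_apply] at h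
    rw [Finset.sum_congr rfl (fun x _ => Finset.sum_congr rfl
      (fun y _ => sympMat_comm (H x (y + b)) (H (x + a) y) ρ ρ'))]
    exact h
  have e22 : ∀ a ≤ m₁, ∀ b ≤ m₂, ∑ x ∈ Finset.range (m₁ - a + 1),
      ∑ y ∈ Finset.range (m₂ - b + 1), sympMat (H (x + a) (y + b)) (H x y) ρ ρ' = 0 := by
    intro a ha b hb
    have h := congrFun (congrFun (h1 a ha b hb) ρ') ρ
    simp only [Matrix.sum_apply, Matrix.zero_apply] at h
    rw [Finset.sum_congr rfl (fun x _ => Finset.sum_congr rfl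
      (fun y _ => sympMat_comm (H (x + a) (y + b)) (H x y) ρ ρ'))]
    exact h
  have main := main_calc m₁ m₂ hL₁ hL₂
    (fun i j i' j' => sympMat (H i j) (H i' j') ρ ρ') hz e11 e12 e21 e22 t t'
  simp only [hH]
  simpa only [sympMat] using main
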